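/- arXiv:1005.4724 — 2 statements merged into one kernel-verified Lean document; each statement's English description precedes it below -/
import Mathlib

section
/- In the m-diagram of a three-row standard Young tableau, any two distinct ms are in one of five relative positions: if (i,j,k) and (i′,j′,k′) are distinct ms with i < i′, then one of the following orderings holds: (1) i<j<k<i′<j′<k′; (2) i<i′<j′<k′<j<k; (3) i<j<i′<j′<k′<k; (4) i<i′<j′<j<k<k′; (5) i<j<i′<k<j′<k′. -/
open scoped Classical

/-- The `j`-th smallest element (0-indexed) of a finite set of naturals (default `0`). -/
noncomputable def nthSmallest (s : Finset ℕ) (j : ℕ) : ℕ := (s.sort (· ≤ ·)).getD j 0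

/-- `(R, S)` satisfies the tableau condition: `|S| ≤ |R|` and for every `j ≤ |S|`, the `j`-th
smallest element of `S` is greater than the `j`-th smallest element of `R`. -/
def TableauCond (R S : Finset ℕ) : Prop :=
  S.card ≤ R.card ∧ ∀ j < S.card, nthSmallest R j < nthSmallest S j

/-- The greedy matching of `S` into `R`: processing the elements `i` of `S` in increasing
order, `greedy R S i = max { j ∈ R : j < i and j ≠ greedy R S i' for every i' ∈ S with i' < i }`
(with value `0` when this set is empty or `i ∉ S`). -/
noncomputable def greedy (R S : Finset ℕ) (i : ℕ) : ℕ :=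
  Nat.strongRecOn i fun i ih =>
    ((R.filter fun j => j < i ∧ ∀ i' (_ : i' ∈ S) (h : i' < i), j ≠ ih i' h).max).unbotD 0

noncomputable def Fset (R S : Finset ℕ) (i : ℕ) : Finset ℕ :=
  R.filter fun j => j < i ∧ ∀ i' (_ : i' ∈ S) (_ : i' < i), j ≠ greedy R S i'

lemma greedy_eq (R S : Finset ℕ) (i : ℕ) :
    greedy R S i = ((Fset R S i).max).unbotD 0 := by
  unfold Fset greedy
  rw [Nat.strongRecOn_eq]

lemma mem_Fset {R S : Finset ℕ} {i j : ℕ} :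
    j ∈ Fset R S i ↔ j ∈ R ∧ j < i ∧ ∀ i' ∈ S, i' < i → j ≠ greedy R S i' := by
  simp [Fset, Finset.mem_filter, and_assoc]

lemma greedy_mem_Fset {R S : Finset ℕ} {i : ℕ} (h : (Fset R S i).Nonempty) :
    greedy R S i ∈ Fset R S i := by
  obtain ⟨a, ha⟩ := Finset.max_of_nonempty h
  have hmem := Finset.mem_of_max ha
  rw [greedy_eq, ha]
  simpa using hmem

lemma le_greedy {R S : Finset ℕ} {i j : ℕ} (hj : j ∈ Fset R S i) : j ≤ greedy R S i := by
  obtain ⟨a, ha⟩ := Finset.max_of_nonempty ⟨j, hj⟩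
  have hle := Finset.le_max hj
  rw [ha] at hle
  rw [greedy_eq, ha]
  exact_mod_cast hle

lemma sorted_getD_length_filter {l : List ℕ} (hl : l.Pairwise (· < ·)) {i : ℕ} (hi : i ∈ l) :
    l.getD ((l.filter (fun x => x < i)).length) 0 = i := by
  induction l with
  | nil => simp at hi
  | cons a t ih =>
    rw [List.pairwise_cons] at hl
    rcases List.mem_cons.mp hi with rfl | hit
    · have hnil : (i :: t).filter (fun x => x < i) = [] := by
        rw [List.filter_eq_nil_iff]
        intro x hx
        rcases List.mem_cons.mp hx with rfl | hx
        · simp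
        · have := hl.1 x hx
          simp; omega
      simp [hnil]
    · have hai : a < i := hl.1 i hit
      have hcons : (a :: t).filter (fun x => x < i) = a :: t.filter (fun x => x < i) := by
        simp [List.filter_cons, hai]
      rw [hcons]
      simpa using ih hl.2 hit

lemma length_filter_sort (S : Finset ℕ) (i : ℕ) :
    ((S.sort (· ≤ ·)).filter (fun x => x < i)).length = (S.filter (· < i)).card := by
  rw [Finset.card_def, Finset.filter_val]
  conv_rhs => rw [← Finset.sort_eq S (· ≤ ·)]
  rw [Multiset.filter_coe, Multiset.coe_card]

lemma nthSmallest_card_filter {S : Finset ℕ} {i : ℕ} (hi : i ∈ S) :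
    nthSmallest S ((S.filter (· < i)).card) = i := by
  rw [nthSmallest, ← length_filter_sort]
  exact sorted_getD_length_filter (Finset.sortedLT_sort S).pairwise ((Finset.mem_sort _).mpr hi)

lemma nthSmallest_mem {S : Finset ℕ} {t : ℕ} (ht : t < S.card) : nthSmallest S t ∈ S := by
  have hlen : t < (S.sort (· ≤ ·)).length := by rwa [Finset.length_sort]
  rw [nthSmallest, List.getD_eq_getElem _ _ hlen]
  exact (Finset.mem_sort _).mp (List.getElem_mem hlen)

lemma nthSmallest_lt_nthSmallest {S : Finset ℕ} {t1 t2 : ℕ} (h12 : t1 < t2) (h2 : t2 < S.card) :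
    nthSmallest S t1 < nthSmallest S t2 := by
  have h2' : t2 < (S.sort (· ≤ ·)).length := by rwa [Finset.length_sort]
  have h1' : t1 < (S.sort (· ≤ ·)).length := lt_trans h12 h2'
  rw [nthSmallest, nthSmallest, List.getD_eq_getElem _ _ h1', List.getD_eq_getElem _ _ h2']
  exact (Finset.sortedLT_sort S).pairwise.rel_get_of_lt h12

lemma card_filter_lt_card_filter {R S : Finset ℕ} (hRS : TableauCond R S) {i : ℕ} (hi : i ∈ S) :
    (S.filter (· < i)).card < (R.filter (· < i)).card := by
  set r := (S.filter (· < i)).card with hr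
  have hrS : r < S.card := by
    have hsub : S.filter (· < i) ⊆ S.erase i := by
      intro x hx
      rw [Finset.mem_filter] at hx
      exact Finset.mem_erase.mpr ⟨by omega, hx.1⟩
    calc r ≤ (S.erase i).card := Finset.card_le_card hsub
      _ < S.card := Finset.card_erase_lt_of_mem hi
  have hri : nthSmallest S r = i := nthSmallest_card_filter hi
  have hlt : nthSmallest R r < i := by
    have := hRS.2 r hrS
    rwa [hri] at this
  have hrR : r < R.card := lt_of_lt_of_le hrS hRS.1
  have hcard : (Finset.range (r + 1)).card ≤ (R.filter (· < i)).card := by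
    apply Finset.card_le_card_of_injOn (fun t => nthSmallest R t)
    · intro t ht
      rw [Finset.mem_coe, Finset.mem_range, Nat.lt_succ_iff] at ht
      refine Finset.mem_filter.mpr ⟨nthSmallest_mem (lt_of_le_of_lt ht hrR), ?_⟩
      rcases eq_or_lt_of_le ht with rfl | hlt'
      · exact hlt
      · exact lt_trans (nthSmallest_lt_nthSmallest hlt' hrR) hlt
    · intro a ha b hb hab
      rw [Finset.mem_coe, Finset.mem_range, Nat.lt_succ_iff] at ha hb
      by_contra hne
      rcases Nat.lt_or_ge a b with hl | hl
      · exact absurd hab (ne_of_lt (nthSmallest_lt_nthSmallest hl (lt_of_le_of_lt hb hrR)))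
      · have : b < a := lt_of_le_of_ne hl (Ne.symm hne)
        exact absurd hab.symm (ne_of_lt (nthSmallest_lt_nthSmallest this (lt_of_le_of_lt ha hrR)))
  rw [Finset.card_range] at hcard
  omega

lemma Fset_nonempty {R S : Finset ℕ} (hRS : TableauCond R S) :
    ∀ i ∈ S, (Fset R S i).Nonempty := by
  intro i
  induction i using Nat.strong_induction_on with
  | _ i ih =>
  intro hi
  set P := (S.filter (· < i)).image (greedy R S) with hP
  have hcardP : P.card = (S.filter (· < i)).card := by
    apply Finset.card_image_of_injOn
    intro a ha b hb hab
    rw [Finset.coe_filter, Set.mem_setOf_eq] at ha hb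
    by_contra hne
    rcases Nat.lt_or_ge a b with hl | hl
    · have hFb := greedy_mem_Fset (ih b hb.2 hb.1)
      exact (mem_Fset.mp hFb).2.2 a ha.1 hl hab.symm
    · have hl' : b < a := lt_of_le_of_ne hl (Ne.symm hne)
      have hFa := greedy_mem_Fset (ih a ha.2 ha.1)
      exact (mem_Fset.mp hFa).2.2 b hb.1 hl' hab
  have hPsub : P ⊆ R.filter (· < i) := by
    intro x hx
    obtain ⟨a, ha, rfl⟩ := Finset.mem_image.mp hx
    obtain ⟨haS, hai⟩ := Finset.mem_filter.mp ha
    have hFa := mem_Fset.mp (greedy_mem_Fset (ih a hai haS))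
    exact Finset.mem_filter.mpr ⟨hFa.1, lt_trans hFa.2.1 hai⟩
  have hlt := card_filter_lt_card_filter hRS hi
  have hsdiff : ((R.filter (· < i)) \ P).Nonempty := by
    rw [← Finset.card_pos]
    have := Finset.le_card_sdiff P (R.filter (· < i))
    omega
  obtain ⟨j, hj⟩ := hsdiff
  rw [Finset.mem_sdiff, Finset.mem_filter] at hj
  refine ⟨j, mem_Fset.mpr ⟨hj.1.1, hj.1.2, ?_⟩⟩
  intro i' hi'S hi'lt heq
  exact hj.2 (Finset.mem_image.mpr ⟨i', Finset.mem_filter.mpr ⟨hi'S, hi'lt⟩, heq.symm⟩)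

lemma greedy_mem_lt {R S : Finset ℕ} (hRS : TableauCond R S) {i : ℕ} (hi : i ∈ S) :
    greedy R S i ∈ R ∧ greedy R S i < i :=
  let h := mem_Fset.mp (greedy_mem_Fset (Fset_nonempty hRS i hi))
  ⟨h.1, h.2.1⟩

lemma greedy_ne_greedy {R S : Finset ℕ} (hRS : TableauCond R S) {q q' : ℕ}
    (hq : q ∈ S) (hq' : q' ∈ S) (hlt : q < q') : greedy R S q' ≠ greedy R S q :=
  (mem_Fset.mp (greedy_mem_Fset (Fset_nonempty hRS q' hq'))).2.2 q hq hlt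

lemma greedy_noncross {R S : Finset ℕ} (hRS : TableauCond R S) {q q' : ℕ}
    (hq : q ∈ S) (hq' : q' ∈ S) (hlt : q < q') (h : greedy R S q' < q) :
    greedy R S q' < greedy R S q := by
  have h' := mem_Fset.mp (greedy_mem_Fset (Fset_nonempty hRS q' hq'))
  have hmem : greedy R S q' ∈ Fset R S q :=
    mem_Fset.mpr ⟨h'.1, h, fun i' hi' hlt' => h'.2.2 i' hi' (lt_trans hlt' hlt)⟩
  exact lt_of_le_of_ne (le_greedy hmem) (greedy_ne_greedy hRS hq hq' hlt)

/-- The arcs produced by the greedy matching of `S` into `R`, as ordered pairs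
`(left endpoint, right endpoint)`. -/
noncomputable def arcsOf (R S : Finset ℕ) : Finset (ℕ × ℕ) :=
  S.image fun i => (greedy R S i, i)

/-- `(B, M, T)` (bottom, middle, top rows) encodes a three-row standard Young tableau with
`N` boxes: the rows partition `{1,…,N}`, row lengths weakly decrease from bottom to top, and
consecutive rows satisfy the tableau condition. -/
def ThreeRowSYT (N : ℕ) (B M T : Finset ℕ) : Prop :=
  Disjoint B M ∧ Disjoint B T ∧ Disjoint M T ∧
  B ∪ M ∪ T = Finset.Icc 1 N ∧
  T.card ≤ M.card ∧ M.card ≤ B.card ∧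
  TableauCond B M ∧ TableauCond M T

/-- Two arcs `(p,q)` and `(p',q')` (with `p<q`, `p'<q'`) cross if `p<p'<q<q'` or
`p'<p<q'<q`. -/
def Cross (a b : ℕ × ℕ) : Prop :=
  (a.1 < b.1 ∧ b.1 < a.2 ∧ a.2 < b.2) ∨ (b.1 < a.1 ∧ a.1 < b.2 ∧ b.2 < a.2)

/-- `(i,j,k)` is an m of the m-diagram of the three-row tableau `(B,M,T)`. -/
def IsM (B M T : Finset ℕ) (i j k : ℕ) : Prop :=
  j ∈ M ∧ i = greedy B M j ∧ k ∈ T ∧ greedy M T k = j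

/-- Any two distinct ms of the m-diagram of a three-row standard Young tableau are in one
of five relative positions. -/
theorem two_ms_five_relative_positions (N : ℕ) (B M T : Finset ℕ)
    (h : ThreeRowSYT N B M T) (i j k i' j' k' : ℕ)
    (hm : IsM B M T i j k) (hm' : IsM B M T i' j' k')
    (hne : (i, j, k) ≠ (i', j', k')) (hii' : i < i') :
    (i < j ∧ j < k ∧ k < i' ∧ i' < j' ∧ j' < k') ∨
    (i < i' ∧ i' < j' ∧ j' < k' ∧ k' < j ∧ j < k) ∨
    (i < j ∧ j < i' ∧ i' < j' ∧ j' < k' ∧ k' < k) ∨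
    (i < i' ∧ i' < j' ∧ j' < j ∧ j < k ∧ k < k') ∨
    (i < j ∧ j < i' ∧ i' < k ∧ k < j' ∧ j' < k') := by
  obtain ⟨hBM, hBT, hMT, -, -, -, hTBM, hTMT⟩ := h
  obtain ⟨hjM, hij, hkT, hjk⟩ := hm
  obtain ⟨hj'M, hij', hk'T, hjk'⟩ := hm'
  have hiB : i ∈ B ∧ i < j := hij ▸ greedy_mem_lt hTBM hjM
  have hi'B : i' ∈ B ∧ i' < j' := hij' ▸ greedy_mem_lt hTBM hj'M
  have hjltk : j < k := hjk ▸ (greedy_mem_lt hTMT hkT).2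
  have hj'ltk' : j' < k' := hjk' ▸ (greedy_mem_lt hTMT hk'T).2
  have hjj'ne : j ≠ j' := by
    intro hjj
    subst hjj
    rw [← hij'] at hij
    omega
  have hkk'ne : k ≠ k' := by
    intro hkk
    subst hkk
    rw [hjk] at hjk'
    exact hjj'ne hjk'
  rcases lt_or_gt_of_ne hjj'ne with hjj' | hj'j
  · -- j < j'
    have hji' : j < i' := by
      rcases lt_trichotomy j i' with h1 | h1 | h1
      · exact h1
      · exact absurd (h1 ▸ hi'B.1) (Finset.disjoint_right.mp hBM hjM)
      · have := greedy_noncross hTBM hjM hj'M hjj' (by rw [← hij']; exact h1)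
        rw [← hij', ← hij] at this
        omega
    rcases lt_or_gt_of_ne hkk'ne with hkk' | hk'k
    · -- k < k'
      have hkj' : k < j' := by
        rcases lt_trichotomy k j' with h1 | h1 | h1
        · exact h1
        · exact absurd (h1 ▸ hkT) (Finset.disjoint_left.mp hMT (h1 ▸ hj'M))
        · have := greedy_noncross hTMT hkT hk'T hkk' (by rw [hjk']; exact h1)
          rw [hjk, hjk'] at this
          omega
      have hki'ne : k ≠ i' := fun he => Finset.disjoint_right.mp hBT (he ▸ hkT) hi'B.1
      rcases lt_or_gt_of_ne hki'ne with hki' | hi'k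
      · exact Or.inl ⟨hiB.2, hjltk, hki', hi'B.2, hj'ltk'⟩
      · exact Or.inr (Or.inr (Or.inr (Or.inr ⟨hiB.2, hji', hi'k, hkj', hj'ltk'⟩)))
    · -- k' < k
      exact Or.inr (Or.inr (Or.inl ⟨hiB.2, hji', hi'B.2, hj'ltk', hk'k⟩))
  · -- j' < j
    rcases lt_or_gt_of_ne hkk'ne with hkk' | hk'k
    · exact Or.inr (Or.inr (Or.inr (Or.inl ⟨hii', hi'B.2, hj'j, hjltk, hkk'⟩)))
    · have hk'j : k' < j := by
        rcases lt_trichotomy k' j with h1 | h1 | h1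
        · exact h1
        · exact absurd (h1 ▸ hk'T) (Finset.disjoint_left.mp hMT (h1 ▸ hjM))
        · have := greedy_noncross hTMT hk'T hkT hk'k (by rw [hjk]; exact h1)
          rw [hjk, hjk'] at this
          omega
      exact Or.inr (Or.inl ⟨hii', hi'B.2, hj'ltk', hk'j, hjltk⟩)
end

section
/- Fix n ≤ k. The map sending a standard Young tableau of shape (k, k, n) (encoded as a partition (B, M, T) of {1,…,2k+n} with |B| = |M| = k and |T| = n) to the arc set of its m-diagram is injective: two such tableaux with the same arc set are equal. -/
open scoped Classical

/-! ### Auxiliary lemmas -/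

theorem greedy_eq_s8 (R S : Finset ℕ) (i : ℕ) :
    greedy R S i =
      ((R.filter fun j => j < i ∧ ∀ i' ∈ S, i' < i → j ≠ greedy R S i').max).unbotD 0 := by
  rw [greedy, Nat.strongRecOn_eq]
  rfl

theorem card_filter_eq_length (s : Finset ℕ) (p : ℕ → Prop) [DecidablePred p] :
    (s.filter p).card = ((s.sort (· ≤ ·)).filter p).length := by
  rw [← List.toFinset_card_of_nodup (List.Nodup.filter _ (s.sort_nodup _)),
    List.toFinset_filter, Finset.sort_toFinset]
  simp

theorem sorted_stuff (l : List ℕ) (hl : l.Pairwise (· < ·)) (j : ℕ) (hj : j < l.length) :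
    (l.filter (· < l.get ⟨j, hj⟩)).length = j ∧
    (l.filter (· ≤ l.get ⟨j, hj⟩)).length = j + 1 := by
  set g := l.get ⟨j, hj⟩ with hg
  have hsplit : l = l.take j ++ l.drop j := (List.take_append_drop j l).symm
  have hdropc : l.drop j = g :: l.drop (j + 1) := by
    rw [hg, List.drop_eq_getElem_cons hj, List.get_eq_getElem]
  have hpw : (l.take j ++ l.drop j).Pairwise (· < ·) := by rw [← hsplit]; exact hl
  rw [List.pairwise_append] at hpw
  obtain ⟨-, hpw2, hcross⟩ := hpw
  have htake : ∀ x ∈ l.take j, x < g := fun x hx =>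
    hcross x hx g (by rw [hdropc]; exact List.mem_cons_self)
  have hdrop : ∀ y ∈ l.drop (j+1), g < y := by
    rw [hdropc] at hpw2
    exact (List.pairwise_cons.mp hpw2).1
  have hlen : (l.take j).length = j := by
    rw [List.length_take]; omega
  constructor
  · conv_lhs => rw [hsplit, hdropc]
    rw [List.filter_append, List.filter_cons,
      List.filter_eq_self.mpr (fun a ha => by simpa using htake a ha),
      List.filter_eq_nil_iff.mpr (fun a ha => by have := hdrop a ha; simp; omega)]
    simp [hlen]
  · conv_lhs => rw [hsplit, hdropc]
    rw [List.filter_append, List.filter_cons,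
      List.filter_eq_self.mpr (fun a ha => by have := htake a ha; simp; omega),
      List.filter_eq_nil_iff.mpr (fun a ha => by have := hdrop a ha; simp; omega)]
    simp [hlen]

theorem nth_eq_get (s : Finset ℕ) (j : ℕ) (hj : j < s.card) :
    nthSmallest s j = (s.sort (· ≤ ·)).get ⟨j, by rwa [Finset.length_sort]⟩ :=
  List.getD_eq_getElem _ _ _

theorem card_filter_lt_nth (s : Finset ℕ) (j : ℕ) (hj : j < s.card) :
    (s.filter (· < nthSmallest s j)).card = j := by
  rw [card_filter_eq_length, nth_eq_get s j hj]
  exact (sorted_stuff _ (s.sortedLT_sort.pairwise) j _).1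

theorem card_filter_le_nth (s : Finset ℕ) (j : ℕ) (hj : j < s.card) :
    (s.filter (· ≤ nthSmallest s j)).card = j + 1 := by
  rw [card_filter_eq_length, nth_eq_get s j hj]
  exact (sorted_stuff _ (s.sortedLT_sort.pairwise) j _).2

theorem exists_nth (s : Finset ℕ) (i : ℕ) (hi : i ∈ s) :
    ∃ j < s.card, nthSmallest s j = i := by
  have : i ∈ s.sort (· ≤ ·) := (Finset.mem_sort _).mpr hi
  obtain ⟨⟨j, hj⟩, hji⟩ := List.mem_iff_get.mp this
  exact ⟨j, by rwa [Finset.length_sort] at hj,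
    by rw [nth_eq_get s j (by rwa [Finset.length_sort] at hj)]; exact hji⟩

theorem filter_lt_card_lt (R S : Finset ℕ) (h : TableauCond R S) (i : ℕ) (hi : i ∈ S) :
    (S.filter (· < i)).card < (R.filter (· < i)).card := by
  obtain ⟨j, hj, hji⟩ := exists_nth S i hi
  have h1 : (S.filter (· < i)).card = j := by rw [← hji]; exact card_filter_lt_nth S j hj
  have h2 : nthSmallest R j < i := hji ▸ h.2 j hj
  have h3 : (R.filter (· ≤ nthSmallest R j)).card = j + 1 :=
    card_filter_le_nth R j (lt_of_lt_of_le hj h.1)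
  have h4 : R.filter (· ≤ nthSmallest R j) ⊆ R.filter (· < i) := by
    intro x hx
    simp only [Finset.mem_filter] at hx ⊢
    exact ⟨hx.1, lt_of_le_of_lt hx.2 h2⟩
  have := Finset.card_le_card h4
  omega

theorem greedy_spec (R S : Finset ℕ) (h : TableauCond R S) (i : ℕ) (hi : i ∈ S) :
    greedy R S i ∈ R ∧ greedy R S i < i ∧
      ∀ i' ∈ S, i' < i → greedy R S i ≠ greedy R S i' := by
  set F := R.filter fun j => j < i ∧ ∀ i' ∈ S, i' < i → j ≠ greedy R S i' with hF
  have hsub : (R.filter (· < i)) \ ((S.filter (· < i)).image (greedy R S)) ⊆ F := by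
    intro x hx
    rw [Finset.mem_sdiff] at hx
    obtain ⟨hx1, hx2⟩ := hx
    rw [Finset.mem_filter] at hx1
    rw [hF, Finset.mem_filter]
    refine ⟨hx1.1, hx1.2, fun i' hi' hlt hne => hx2 ?_⟩
    rw [Finset.mem_image]
    exact ⟨i', Finset.mem_filter.mpr ⟨hi', hlt⟩, hne.symm⟩
  have hcard : 1 ≤ F.card := by
    have h1 := filter_lt_card_lt R S h i hi
    have h2 := Finset.card_le_card hsub
    have h3 := Finset.le_card_sdiff ((S.filter (· < i)).image (greedy R S)) (R.filter (· < i))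
    have h4 := Finset.card_image_le (s := S.filter (· < i)) (f := greedy R S)
    omega
  obtain ⟨m, hm⟩ := Finset.card_pos.mp hcard
  obtain ⟨a, ha⟩ := Finset.max_of_nonempty ⟨m, hm⟩
  have hgi : greedy R S i = a := by rw [greedy_eq_s8, ← hF, ha]; rfl
  have haF : a ∈ F := Finset.mem_of_max ha
  rw [hF, Finset.mem_filter] at haF
  rw [hgi]
  exact ⟨haF.1, haF.2.1, haF.2.2⟩

theorem mem_arcsOf {R S : Finset ℕ} {p q : ℕ} :
    (p, q) ∈ arcsOf R S ↔ q ∈ S ∧ greedy R S q = p := by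
  simp only [arcsOf, Finset.mem_image, Prod.mk.injEq]
  constructor
  · rintro ⟨i, hi, hp, rfl⟩; exact ⟨hi, hp⟩
  · rintro ⟨hq, hp⟩; exact ⟨q, hq, hp, rfl⟩

theorem snd_arcsOf (R S : Finset ℕ) : (arcsOf R S).image Prod.snd = S := by
  ext x
  simp [arcsOf, Finset.mem_image]

theorem topRec_eq (N : ℕ) (B M T : Finset ℕ) (h : ThreeRowSYT N B M T) :
    ((arcsOf B M ∪ arcsOf M T).filter
        fun pq => pq.1 ∈ (arcsOf B M ∪ arcsOf M T).image Prod.snd).image Prod.snd = T := by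
  obtain ⟨hBM, hBT, hMT, hU, hc1, hc2, hTC1, hTC2⟩ := h
  have hrend : (arcsOf B M ∪ arcsOf M T).image Prod.snd = M ∪ T := by
    rw [Finset.image_union, snd_arcsOf, snd_arcsOf]
  ext q
  simp only [Finset.mem_image, Finset.mem_filter, hrend]
  constructor
  · rintro ⟨⟨p, q'⟩, ⟨hpq, hp⟩, rfl⟩
    rcases Finset.mem_union.mp hpq with h1 | h2
    · exfalso
      obtain ⟨hq'M, rfl⟩ := mem_arcsOf.mp h1
      have hB : greedy B M q' ∈ B := (greedy_spec B M hTC1 q' hq'M).1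
      rcases Finset.mem_union.mp hp with hM | hT
      · exact (Finset.disjoint_left.mp hBM) hB hM
      · exact (Finset.disjoint_left.mp hBT) hB hT
    · exact (mem_arcsOf.mp h2).1
  · intro hq
    refine ⟨(greedy M T q, q), ⟨Finset.mem_union_right _ (mem_arcsOf.mpr ⟨hq, rfl⟩), ?_⟩, rfl⟩
    exact Finset.mem_union_left _ (greedy_spec M T hTC2 q hq).1

/-- For `n ≤ k`, the map sending a standard Young tableau of shape `(k,k,n)` to the arc set
of its m-diagram is injective. -/
theorem mDiagram_injective (n k : ℕ) (hnk : n ≤ k)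
    (B M T B' M' T' : Finset ℕ)
    (h : ThreeRowSYT (2 * k + n) B M T)
    (hB : B.card = k) (hM : M.card = k) (hT : T.card = n)
    (h' : ThreeRowSYT (2 * k + n) B' M' T')
    (hB' : B'.card = k) (hM' : M'.card = k) (hT' : T'.card = n)
    (harcs : arcsOf B M ∪ arcsOf M T = arcsOf B' M' ∪ arcsOf M' T') :
    B = B' ∧ M = M' ∧ T = T' := by
  have hTeq : T = T' := by
    rw [← topRec_eq _ B M T h, ← topRec_eq _ B' M' T' h', harcs]
  have hMTeq : M ∪ T = M' ∪ T' := by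
    rw [← snd_arcsOf B M, ← snd_arcsOf M T, ← Finset.image_union, harcs,
      Finset.image_union, snd_arcsOf, snd_arcsOf]
  have hMeq : M = M' := by
    have h1 : (M ∪ T) \ T = (M' ∪ T') \ T' := by rw [hMTeq, hTeq]
    rwa [Finset.union_sdiff_cancel_right h.2.2.1,
      Finset.union_sdiff_cancel_right h'.2.2.1] at h1
  have hBeq : B = B' := by
    have h1 : B ∪ (M ∪ T) = Finset.Icc 1 (2 * k + n) := by
      rw [← Finset.union_assoc]; exact h.2.2.2.1
    have h2 : B' ∪ (M' ∪ T') = Finset.Icc 1 (2 * k + n) := by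
      rw [← Finset.union_assoc]; exact h'.2.2.2.1
    have d1 : Disjoint B (M ∪ T) := Finset.disjoint_union_right.mpr ⟨h.1, h.2.1⟩
    have d2 : Disjoint B' (M' ∪ T') := Finset.disjoint_union_right.mpr ⟨h'.1, h'.2.1⟩
    calc B = (B ∪ (M ∪ T)) \ (M ∪ T) := (Finset.union_sdiff_cancel_right d1).symm
      _ = (B' ∪ (M' ∪ T')) \ (M' ∪ T') := by rw [h1, h2, hMTeq]
      _ = B' := Finset.union_sdiff_cancel_right d2
  exact ⟨hBeq, hMeq, hTeq⟩
end
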